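/- Let Q be the n×n symmetric matrix with entries Q_{ii} = β_i + 2α_i and Q_{ij} = α_i + α_j for i ≠ j, where α₁ ≤ α₂ ≤ ⋯ ≤ α_n and β_i ∈ ℝ. Then Q ∈ ℳ_n; consequently, for every λ ∈ ℝ, Q − λE (E the all-ones matrix) is copositive if and only if it is SPN. -/

import Mathlib

open Matrix

def Copositive {ι : Type*} [Fintype ι] (A : Matrix ι ι ℝ) : Prop :=
  ∀ x : ι → ℝ, (∀ i, 0 ≤ x i) → 0 ≤ x ⬝ᵥ A.mulVec x

def SPN {ι : Type*} [Fintype ι] (A : Matrix ι ι ℝ) : Prop :=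
  ∃ P N : Matrix ι ι ℝ, P.PosSemidef ∧ (∀ i j, 0 ≤ N i j) ∧ A = P + N

def Mn {n : ℕ} (A : Matrix (Fin n) (Fin n) ℝ) : Prop :=
  ∀ i j k l : Fin n, i ≤ k → j ≤ l → i ≠ j → k ≠ l → A i j ≤ A k l

namespace SPN19

variable {m : ℕ}

lemma quadForm_eq (A : Matrix (Fin m) (Fin m) ℝ) (x : Fin m → ℝ) :
    x ⬝ᵥ A.mulVec x = ∑ i, ∑ j, x i * A i j * x j := by
  simp only [dotProduct, mulVec, Finset.mul_sum]
  exact Finset.sum_congr rfl fun i _ => Finset.sum_congr rfl fun j _ => by ring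

lemma star_pi (x : Fin m → ℝ) : star x = x := funext fun i => by simp

lemma posSemidef_iff (A : Matrix (Fin m) (Fin m) ℝ) :
    A.PosSemidef ↔ (∀ i j, A i j = A j i) ∧ ∀ x : Fin m → ℝ, 0 ≤ x ⬝ᵥ A.mulVec x := by
  constructor
  · rintro ⟨h1, h2⟩
    refine ⟨fun i j => ?_, fun x => ?_⟩
    · have := congrFun (congrFun h1 j) i
      simp only [Matrix.conjTranspose_apply, star_trivial] at this
      exact this
    · have := (Matrix.posSemidef_iff_dotProduct_mulVec.mp ⟨h1, h2⟩).2 x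
      rwa [star_pi] at this
  · rintro ⟨h1, h2⟩
    refine ⟨?_, fun x => ?_⟩
    · ext i j
      simp only [Matrix.conjTranspose_apply, star_trivial]
      exact h1 j i
    · have := h2 (Finsupp.equivFunOnFinite x)
      simpa [Finsupp.sum_fintype, dotProduct, mulVec, Finset.mul_sum, mul_assoc] using this

lemma spn_copos {ι : Type*} [Fintype ι] {A : Matrix ι ι ℝ} (h : SPN A) : Copositive A := by
  obtain ⟨P, N, hP, hN, rfl⟩ := h
  intro x hx
  have h1 : 0 ≤ x ⬝ᵥ P.mulVec x := by
    have := hP.dotProduct_mulVec_nonneg x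
    have hs : star x = x := funext fun i => by simp
    rwa [hs] at this
  have h2 : 0 ≤ x ⬝ᵥ N.mulVec x := by
    simp only [dotProduct, mulVec]
    exact Finset.sum_nonneg fun i _ =>
      mul_nonneg (hx i) (Finset.sum_nonneg fun j _ => mul_nonneg (hN i j) (hx j))
  rw [Matrix.add_mulVec, dotProduct_add]
  linarith

lemma diag_nonneg {A : Matrix (Fin m) (Fin m) ℝ} (h : Copositive A) (i : Fin m) :
    0 ≤ A i i := by
  have hx : ∀ j, 0 ≤ (Pi.single i 1 : Fin m → ℝ) j := by
    intro j
    rcases eq_or_ne j i with rfl | hj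
    · simp
    · simp [Pi.single_apply, hj]
  have h0 := h _ hx
  rw [quadForm_eq] at h0
  have : ∑ i', ∑ j', (Pi.single i 1 : Fin m → ℝ) i' * A i' j' * (Pi.single i 1 : Fin m → ℝ) j'
      = A i i := by
    simp [Pi.single_apply, Finset.sum_ite_eq, Finset.mem_univ, ite_mul, mul_ite]
  rwa [this] at h0

lemma single_quad (A : Matrix (Fin m) (Fin m) ℝ) (i j : Fin m) :
    (Pi.single i (1:ℝ)) ⬝ᵥ A.mulVec (Pi.single j (1:ℝ)) = A i j := by
  simp [dotProduct, mulVec, Pi.single_apply, mul_ite, ite_mul,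
    Finset.sum_ite_eq, Finset.mem_univ]

lemma double_sum_factor (u x : Fin m → ℝ) (c : ℝ) :
    ∑ i, ∑ j, x i * (u i * u j / c) * x j
      = (∑ i, u i * x i) * (∑ i, u i * x i) / c := by
  rw [Finset.sum_mul_sum, Finset.sum_div]
  refine Finset.sum_congr rfl fun i _ => ?_
  rw [Finset.sum_div]
  exact Finset.sum_congr rfl fun j _ => by ring

/-- Pad a matrix with a zero row/column in position `0`. -/
def padZ (A : Matrix (Fin m) (Fin m) ℝ) : Matrix (Fin (m+1)) (Fin (m+1)) ℝ :=
  Matrix.of fun i j =>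
    Fin.cases 0 (fun i' => Fin.cases 0 (fun j' => A i' j') j) i

@[simp] lemma padZ_zero_left (A : Matrix (Fin m) (Fin m) ℝ) (j : Fin (m+1)) :
    padZ A 0 j = 0 := by simp [padZ]

@[simp] lemma padZ_zero_right (A : Matrix (Fin m) (Fin m) ℝ) (i : Fin (m+1)) :
    padZ A i 0 = 0 := by
  rcases Fin.eq_zero_or_eq_succ i with rfl | ⟨i', rfl⟩ <;> simp [padZ]

@[simp] lemma padZ_succ_succ (A : Matrix (Fin m) (Fin m) ℝ) (i j : Fin m) :
    padZ A i.succ j.succ = A i j := by simp [padZ]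

lemma padZ_quad (A : Matrix (Fin m) (Fin m) ℝ) (x : Fin (m+1) → ℝ) :
    ∑ i, ∑ j, x i * padZ A i j * x j = ∑ i, ∑ j, x i.succ * A i j * x j.succ := by
  rw [Fin.sum_univ_succ]
  simp only [padZ_zero_left, padZ_zero_right, padZ_succ_succ, mul_zero, zero_mul,
    Finset.sum_const_zero, zero_add]
  refine (Finset.sum_congr rfl fun i _ => ?_)
  rw [Fin.sum_univ_succ]
  simp

lemma padZ_psd {A : Matrix (Fin m) (Fin m) ℝ} (hA : A.PosSemidef) :
    (padZ A).PosSemidef := by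
  rw [posSemidef_iff] at hA ⊢
  obtain ⟨h1, h2⟩ := hA
  refine ⟨fun i j => ?_, fun x => ?_⟩
  · rcases Fin.eq_zero_or_eq_succ i with rfl | ⟨i', rfl⟩ <;>
      rcases Fin.eq_zero_or_eq_succ j with rfl | ⟨j', rfl⟩ <;> simp
    exact h1 i' j' 
  · rw [quadForm_eq, padZ_quad]
    have := h2 (fun i => x i.succ)
    rwa [quadForm_eq] at this

/-- Pad a matrix with a zero row/column in the last position. -/
def padL (A : Matrix (Fin m) (Fin m) ℝ) : Matrix (Fin (m+1)) (Fin (m+1)) ℝ :=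
  Matrix.of fun i j =>
    Fin.lastCases 0 (fun i' => Fin.lastCases 0 (fun j' => A i' j') j) i

@[simp] lemma padL_last_left (A : Matrix (Fin m) (Fin m) ℝ) (j : Fin (m+1)) :
    padL A (Fin.last m) j = 0 := by simp [padL]

@[simp] lemma padL_last_right (A : Matrix (Fin m) (Fin m) ℝ) (i : Fin (m+1)) :
    padL A i (Fin.last m) = 0 := by
  rcases Fin.eq_castSucc_or_eq_last i with ⟨i', rfl⟩ | rfl <;> simp [padL]

@[simp] lemma padL_cast_cast (A : Matrix (Fin m) (Fin m) ℝ) (i j : Fin m) :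
    padL A i.castSucc j.castSucc = A i j := by simp [padL]

lemma padL_quad (A : Matrix (Fin m) (Fin m) ℝ) (x : Fin (m+1) → ℝ) :
    ∑ i, ∑ j, x i * padL A i j * x j
      = ∑ i, ∑ j, x i.castSucc * A i j * x j.castSucc := by
  rw [Fin.sum_univ_castSucc]
  simp only [padL_last_left, padL_last_right, padL_cast_cast, mul_zero, zero_mul,
    Finset.sum_const_zero, add_zero]
  refine (Finset.sum_congr rfl fun i _ => ?_)
  rw [Fin.sum_univ_castSucc]
  simp

lemma padL_psd {A : Matrix (Fin m) (Fin m) ℝ} (hA : A.PosSemidef) :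
    (padL A).PosSemidef := by
  rw [posSemidef_iff] at hA ⊢
  obtain ⟨h1, h2⟩ := hA
  refine ⟨fun i j => ?_, fun x => ?_⟩
  · rcases Fin.eq_castSucc_or_eq_last i with ⟨i', rfl⟩ | rfl <;>
      rcases Fin.eq_castSucc_or_eq_last j with ⟨j', rfl⟩ | rfl <;> simp
    exact h1 i' j' 
  · rw [quadForm_eq, padL_quad]
    have := h2 (fun i => x i.castSucc)
    rwa [quadForm_eq] at this

lemma rank1_psd (v : Fin m → ℝ) (c : ℝ) (hc : 0 < c) :
    (Matrix.of fun i j => v i * v j / c).PosSemidef := by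
  rw [posSemidef_iff]
  refine ⟨fun i j => ?_, fun x => ?_⟩
  · simp only [Matrix.of_apply]; ring
  · rw [quadForm_eq]
    have h : ∑ i, ∑ j, x i * (Matrix.of fun i j => v i * v j / c) i j * x j
        = (∑ i, v i * x i) * (∑ i, v i * x i) / c := by
      simpa only [Matrix.of_apply] using double_sum_factor v x c
    rw [h]
    exact div_nonneg (mul_self_nonneg _) hc.le

lemma cop_restrict_cast {M : Matrix (Fin (m+1)) (Fin (m+1)) ℝ} (h : Copositive M) :
    Copositive (M.submatrix Fin.castSucc Fin.castSucc) := by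
  intro x' hx'
  have hx : ∀ i, 0 ≤ (Fin.snoc x' 0 : Fin (m+1) → ℝ) i := by
    intro i
    rcases Fin.eq_castSucc_or_eq_last i with ⟨i', rfl⟩ | rfl
    · simpa using hx' i'
    · simp
  have h0 := h _ hx
  rw [quadForm_eq] at h0
  rw [quadForm_eq]
  have key : ∑ i, ∑ j, (Fin.snoc x' 0 : Fin (m+1) → ℝ) i * M i j *
        (Fin.snoc x' 0 : Fin (m+1) → ℝ) j
      = ∑ i, ∑ j, x' i * (M.submatrix Fin.castSucc Fin.castSucc) i j * x' j := by
    rw [Fin.sum_univ_castSucc]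
    simp only [Fin.snoc_last, Fin.snoc_castSucc, zero_mul, mul_zero,
      Finset.sum_const_zero, add_zero, Matrix.submatrix_apply]
    refine Finset.sum_congr rfl fun i _ => ?_
    rw [Fin.sum_univ_castSucc]
    simp
  rw [key] at h0
  exact h0

lemma main : ∀ (n : ℕ) (M : Matrix (Fin n) (Fin n) ℝ),
    (∀ i j, M j i = M i j) → Mn M → Copositive M → SPN M := by
  intro n
  induction n with
  | zero =>
      intro M _ _ _
      exact ⟨0, 0, Matrix.PosSemidef.zero, fun i j => le_rfl,
        by ext i j; exact i.elim0⟩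
  | succ n IH =>
      intro M hsy hmn hcop
      by_cases hrow : ∀ j : Fin n, 0 ≤ M (Fin.last n) j.castSucc
      · -- the last row is nonnegative: peel it off
        set M' := M.submatrix Fin.castSucc Fin.castSucc with hM'def
        have hsy' : ∀ i j, M' j i = M' i j := fun i j => hsy _ _
        have hmn' : Mn M' := by
          intro i j k l hik hjl hij hkl
          exact hmn _ _ _ _ (by simpa using hik) (by simpa using hjl)
            (fun hc => hij (Fin.castSucc_injective _ hc))
            (fun hc => hkl (Fin.castSucc_injective _ hc))
        obtain ⟨P', N', hP', hN', hMeq⟩ := IH M' hsy' hmn' (cop_restrict_cast hcop)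
        refine ⟨padL P', M - padL P', padL_psd hP', ?_, by ext i j; simp⟩
        intro i j
        have hM'pn : ∀ i' j', M' i' j' = P' i' j' + N' i' j' := by
          intro i' j'
          rw [hMeq]; simp
        rcases Fin.eq_castSucc_or_eq_last i with ⟨i', rfl⟩ | rfl
        · rcases Fin.eq_castSucc_or_eq_last j with ⟨j', rfl⟩ | rfl
          · have := hM'pn i' j'
            simp only [hM'def, Matrix.submatrix_apply] at this
            simp only [Matrix.sub_apply, padL_cast_cast]
            linarith [hN' i' j']
          · simp only [Matrix.sub_apply, padL_last_right, sub_zero]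
            rw [hsy (Fin.last n) i'.castSucc]
            exact hrow i'
        · rcases Fin.eq_castSucc_or_eq_last j with ⟨j', rfl⟩ | rfl
          · simp only [Matrix.sub_apply, padL_last_left, sub_zero]
            exact hrow j'
          · simp only [Matrix.sub_apply, padL_last_left, sub_zero]
            exact diag_nonneg hcop _
      · -- there is a negative entry in the last row: then row 0 is totally negative
        push_neg at hrow
        obtain ⟨j₀, hj₀⟩ := hrow
        have hneg : ∀ k : Fin n, M 0 k.succ < 0 := by
          intro k
          have h1 : M 0 k.succ ≤ M j₀.castSucc (Fin.last n) :=
            hmn _ _ _ _ (Fin.zero_le _) (Fin.le_last _)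
              (Ne.symm (Fin.succ_ne_zero k)) (ne_of_lt (Fin.castSucc_lt_last j₀))
          have h2 : M j₀.castSucc (Fin.last n) = M (Fin.last n) j₀.castSucc :=
            hsy (Fin.last n) j₀.castSucc
          linarith
        have hdpos : 0 < M 0 0 := by
          by_contra hcon
          push_neg at hcon
          set b := M 0 j₀.succ with hb
          have hbneg : b < 0 := hneg j₀
          set d := M j₀.succ j₀.succ with hd
          have hd0 : 0 ≤ d := diag_nonneg hcop _
          set t : ℝ := (d + 1) / (-(2 * b)) with ht
          have htpos : 0 < t := div_pos (by linarith) (by linarith)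
          set u : Fin (n+1) → ℝ := Pi.single 0 1 with hu
          set e : Fin (n+1) → ℝ := Pi.single j₀.succ 1 with he
          set x : Fin (n+1) → ℝ := t • u + e with hx
          have hxnn : ∀ i, 0 ≤ x i := by
            intro i
            have h1 : (0:ℝ) ≤ u i := by
              rw [hu]
              rcases eq_or_ne i 0 with rfl | h
              · simp
              · simp [Pi.single_apply, h]
            have h2 : (0:ℝ) ≤ e i := by
              rw [he]
              rcases eq_or_ne i j₀.succ with rfl | h
              · simp
              · simp [Pi.single_apply, h]
            have h3 : x i = t * u i + e i := by
              rw [hx]; simp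
            rw [h3]
            have := mul_nonneg htpos.le h1
            linarith
          have hq := hcop x hxnn
          have hexp : x ⬝ᵥ M.mulVec x
              = t * t * M 0 0 + t * b + t * b + d := by
            rw [hx, hu, he]
            rw [Matrix.mulVec_add, Matrix.mulVec_smul]
            rw [dotProduct_add, add_dotProduct, add_dotProduct,
              dotProduct_smul, dotProduct_smul, smul_dotProduct, smul_dotProduct]
            rw [single_quad, single_quad, single_quad, single_quad]
            rw [hsy 0 j₀.succ]
            simp only [smul_eq_mul, hb, hd]
            ring
          rw [hexp] at hq
          have hbne : b ≠ 0 := ne_of_lt hbneg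
          have htb : t * b = -((d + 1) / 2) := by
            rw [ht]
            field_simp
          have h5 : t * t * M 0 0 ≤ 0 :=
            mul_nonpos_of_nonneg_of_nonpos (mul_nonneg htpos.le htpos.le) hcon
          rw [htb] at hq
          linarith
        -- Schur complement reduction on row/column 0
        set c := M 0 0 with hcdef
        have hc0 : c ≠ 0 := ne_of_gt hdpos
        set w : Fin n → ℝ := fun j => M 0 j.succ with hwdef
        set M₂ : Matrix (Fin n) (Fin n) ℝ :=
          Matrix.of (fun i j => M i.succ j.succ - w i * w j / c) with hM₂def
        have hM₂app : ∀ i j, M₂ i j = M i.succ j.succ - w i * w j / c := by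
          intro i j; rw [hM₂def]; rfl
        have hsy₂ : ∀ i j, M₂ j i = M₂ i j := by
          intro i j
          rw [hM₂app, hM₂app, hsy i.succ j.succ]
          ring
        have hmn₂ : Mn M₂ := by
          intro i j k l hik hjl hij hkl
          have h1 : M i.succ j.succ ≤ M k.succ l.succ :=
            hmn _ _ _ _ (by simpa using hik) (by simpa using hjl)
              (by simpa [Fin.succ_inj] using hij) (by simpa [Fin.succ_inj] using hkl)
          have hwik : w i ≤ w k :=
            hmn 0 i.succ 0 k.succ le_rfl (by simpa using hik)
              (Ne.symm (Fin.succ_ne_zero i)) (Ne.symm (Fin.succ_ne_zero k))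
          have hwjl : w j ≤ w l :=
            hmn 0 j.succ 0 l.succ le_rfl (by simpa using hjl)
              (Ne.symm (Fin.succ_ne_zero j)) (Ne.symm (Fin.succ_ne_zero l))
          have hwk : w k < 0 := hneg k
          have hwl : w l < 0 := hneg l
          have hprod : w k * w l ≤ w i * w j := by nlinarith
          have hdiv : w k * w l / c ≤ w i * w j / c :=
            (div_le_div_iff_of_pos_right hdpos).mpr hprod
          rw [hM₂app, hM₂app]
          linarith
        have hcop₂ : Copositive M₂ := by
          intro x' hx'
          set W := ∑ j, w j * x' j with hWdef
          have hWnp : W ≤ 0 :=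
            Finset.sum_nonpos fun j _ =>
              mul_nonpos_iff.mpr (Or.inr ⟨(hneg j).le, hx' j⟩)
          set x : Fin (n+1) → ℝ := fun i => Fin.cases (-W / c) x' i with hxdef
          have hx0 : x 0 = -W / c := rfl
          have hxs : ∀ i : Fin n, x i.succ = x' i := fun i => rfl
          have hxnn : ∀ i, 0 ≤ x i := by
            intro i
            rcases Fin.eq_zero_or_eq_succ i with rfl | ⟨i', rfl⟩
            · rw [hx0]
              exact div_nonneg (by linarith) hdpos.le
            · rw [hxs]
              exact hx' i'
          have hq := hcop x hxnn
          rw [quadForm_eq] at hq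
          have hsplit : ∑ i, ∑ j, x i * M i j * x j
              = x 0 * M 0 0 * x 0 + (∑ j, x 0 * M 0 j.succ * x' j)
                + ((∑ i, x' i * M i.succ 0 * x 0)
                  + ∑ i, ∑ j, x' i * M i.succ j.succ * x' j) := by
            rw [Fin.sum_univ_succ]
            congr 1
            · rw [Fin.sum_univ_succ]
              simp only [hxs]
            · rw [← Finset.sum_add_distrib]
              refine Finset.sum_congr rfl fun i _ => ?_
              rw [Fin.sum_univ_succ]
              simp only [hxs]
          have e1 : ∑ j, x 0 * M 0 j.succ * x' j = x 0 * W := by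
            rw [hWdef, Finset.mul_sum]
            refine Finset.sum_congr rfl fun j _ => ?_
            rw [hwdef]
            ring
          have e2 : ∑ i, x' i * M i.succ 0 * x 0 = x 0 * W := by
            rw [hWdef, Finset.mul_sum]
            refine Finset.sum_congr rfl fun i _ => ?_
            rw [hsy 0 i.succ, hwdef]
            ring
          rw [hsplit, e1, e2] at hq
          have hR : x' ⬝ᵥ M₂.mulVec x'
              = (∑ i, ∑ j, x' i * M i.succ j.succ * x' j) - W * W / c := by
            rw [quadForm_eq]
            have hterm : ∀ i ∈ Finset.univ, ∀ j ∈ Finset.univ,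
                x' i * M₂ i j * x' j
                = x' i * M i.succ j.succ * x' j - x' i * (w i * w j / c) * x' j := by
              intro i _ j _
              rw [hM₂app]
              ring
            calc ∑ i, ∑ j, x' i * M₂ i j * x' j
                = ∑ i, ∑ j, (x' i * M i.succ j.succ * x' j
                    - x' i * (w i * w j / c) * x' j) := by
                  refine Finset.sum_congr rfl fun i hi => ?_
                  exact Finset.sum_congr rfl fun j hj => hterm i hi j hj
              _ = (∑ i, ∑ j, x' i * M i.succ j.succ * x' j)
                    - ∑ i, ∑ j, x' i * (w i * w j / c) * x' j := by
                  rw [← Finset.sum_sub_distrib]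
                  exact Finset.sum_congr rfl fun i _ => by
                    rw [← Finset.sum_sub_distrib]
              _ = (∑ i, ∑ j, x' i * M i.succ j.succ * x' j) - W * W / c := by
                  rw [double_sum_factor w x' c, hWdef]
          rw [hR]
          have hx0v : x 0 = -W / c := hx0
          have hfin : x 0 * c * x 0 + x 0 * W + (x 0 * W
              + ∑ i, ∑ j, x' i * M i.succ j.succ * x' j)
              = (∑ i, ∑ j, x' i * M i.succ j.succ * x' j) - W * W / c := by
            rw [hx0v]
            field_simp
            ring
          rw [← hcdef] at hq
          linarith [hq, hfin.symm.le]
        obtain ⟨P₂, N₂, hP₂, hN₂, hM₂eq⟩ := IH M₂ hsy₂ hmn₂ hcop₂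
        have hM₂pn : ∀ i j, M₂ i j = P₂ i j + N₂ i j := by
          intro i j; rw [hM₂eq]; simp
        set v : Fin (n+1) → ℝ := fun i => M i 0 with hvdef
        refine ⟨(Matrix.of fun i j => v i * v j / c) + padZ P₂, padZ N₂,
          Matrix.PosSemidef.add (rank1_psd v c hdpos) (padZ_psd hP₂), ?_, ?_⟩
        · intro i j
          rcases Fin.eq_zero_or_eq_succ i with rfl | ⟨i', rfl⟩
          · simp
          · rcases Fin.eq_zero_or_eq_succ j with rfl | ⟨j', rfl⟩
            · simp
            · simpa using hN₂ i' j'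
        · ext i j
          simp only [Matrix.add_apply, Matrix.of_apply]
          rcases Fin.eq_zero_or_eq_succ i with rfl | ⟨i', rfl⟩
          · rcases Fin.eq_zero_or_eq_succ j with rfl | ⟨j', rfl⟩
            · simp only [padZ_zero_left, add_zero]
              have : v 0 = c := rfl
              rw [this]
              field_simp
              rfl
            · simp only [padZ_zero_left, add_zero]
              have h1 : v 0 = c := rfl
              have h2 : v j'.succ = M j'.succ 0 := rfl
              rw [h1, h2, hsy 0 j'.succ]
              field_simp
          · rcases Fin.eq_zero_or_eq_succ j with rfl | ⟨j', rfl⟩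
            · simp only [padZ_zero_right, add_zero]
              have h2 : v i'.succ = M i'.succ 0 := rfl
              have h1 : v 0 = c := rfl
              rw [h1, h2]
              field_simp
            · simp only [padZ_succ_succ]
              have h1 : v i'.succ = w i' := hsy 0 i'.succ
              have h2 : v j'.succ = w j' := hsy 0 j'.succ
              have h3 := hM₂pn i' j'
              rw [hM₂app] at h3
              rw [h1, h2]
              linarith

end SPN19

theorem stmt_19 {n : ℕ} (α β : Fin n → ℝ) (hα : ∀ i j : Fin n, i ≤ j → α i ≤ α j)
    (Q : Matrix (Fin n) (Fin n) ℝ)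
    (hQ : Q = fun i j => if i = j then β i + 2 * α i else α i + α j) :
    Mn Q ∧ ∀ l : ℝ,
      Copositive (Q - l • (Matrix.of fun _ _ => (1 : ℝ))) ↔
        SPN (Q - l • (Matrix.of fun _ _ => (1 : ℝ))) := by
  subst hQ
  constructor
  · intro i j k l hik hjl hij hkl
    show (if i = j then β i + 2 * α i else α i + α j)
        ≤ (if k = l then β k + 2 * α k else α k + α l)
    rw [if_neg hij, if_neg hkl]
    exact add_le_add (hα i k hik) (hα j l hjl)
  · intro l
    constructor
    · intro hcop
      apply SPN19.main
      · intro i j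
        show (if j = i then β j + 2 * α j else α j + α i) - l * 1
          = (if i = j then β i + 2 * α i else α i + α j) - l * 1
        rcases eq_or_ne i j with rfl | h
        · rfl
        · rw [if_neg h, if_neg (Ne.symm h)]
          ring
      · intro i j k l' hik hjl hij hkl
        show (if i = j then β i + 2 * α i else α i + α j) - l * 1
          ≤ (if k = l' then β k + 2 * α k else α k + α l') - l * 1
        rw [if_neg hij, if_neg hkl]
        have h1 := hα i k hik
        have h2 := hα j l' hjl
        linarith
      · exact hcop
    · exact fun h => SPN19.spn_copos h
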